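/- Let η_n be a Markov chain on finite X such that for every pair of states i, j there is a path i = l_0, l_1, …, l_n = j with each transition probability p_{l_{m} l_{m+1}}(ε) > 0 for all ε ∈ (0, ε₀] (condition A). Fix r ∈ X and let _r Y_i = {j ∈ X \ {r} : _r p_{ij}(ε) > 0, ε ∈ (0, ε₀]} be the transition sets of the reduced chain on X \ {r}, where _r p_{ij}(ε) = p_{ij}(ε) + p_{ir}(ε) p_{rj}(ε)/(1 − p_{rr}(ε)). Then _r Y_i = Y⁻_{ir} ∪ Y⁺_{ir}, where Y⁺_{ir} = {j ∈ X \ {r} : j ∈ Y_i} and Y⁻_{ir} = {j ∈ X \ {r} : j ∈ Y_r} if r ∈ Y_i and Y⁻_{ir} = ∅ otherwise; moreover the reduced chain also satisfies condition A on X \ {r} with these transition sets. -/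

import Mathlib

open Filter Topology

private lemma red_mem_iff {X : Type*} [DecidableEq X] (Y : X → Finset X) (r a b : X) :
    b ∈ (Y a).erase r ∪ (if r ∈ Y a then (Y r).erase r else ∅) ↔
      b ≠ r ∧ (b ∈ Y a ∨ (r ∈ Y a ∧ b ∈ Y r)) := by
  constructor
  · intro hb
    rcases Finset.mem_union.1 hb with h1 | h1
    · exact ⟨(Finset.mem_erase.1 h1).1, Or.inl (Finset.mem_erase.1 h1).2⟩
    · by_cases h : r ∈ Y a
      · rw [if_pos h] at h1
        exact ⟨(Finset.mem_erase.1 h1).1, Or.inr ⟨h, (Finset.mem_erase.1 h1).2⟩⟩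
      · rw [if_neg h] at h1; simp at h1
  · rintro ⟨hne, h1 | ⟨h1, h2⟩⟩
    · exact Finset.mem_union_left _ (Finset.mem_erase.2 ⟨hne, h1⟩)
    · exact Finset.mem_union_right _
        (by rw [if_pos h1]; exact Finset.mem_erase.2 ⟨hne, h2⟩)

private lemma red_path {X : Type*} [DecidableEq X] (Y : X → Finset X) (r : X) :
    ∀ n : ℕ, 1 ≤ n → ∀ l : ℕ → X, l 0 ≠ r → l n ≠ r →
      (∀ m < n, l (m + 1) ∈ Y (l m)) →
      ∃ n' : ℕ, 1 ≤ n' ∧ ∃ l' : ℕ → X, l' 0 = l 0 ∧ l' n' = l n ∧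
        ∀ m < n', l' (m + 1) ∈
          (Y (l' m)).erase r ∪ (if r ∈ Y (l' m) then (Y r).erase r else ∅) := by
  intro n
  induction n using Nat.strong_induction_on with
  | _ n ih =>
    intro hn l h0 hn' hstep
    rcases Nat.lt_or_ge n 2 with h2 | h2
    · -- n = 1
      interval_cases n
      refine ⟨1, le_refl _, l, rfl, rfl, ?_⟩
      intro m hm
      interval_cases m
      rw [red_mem_iff]
      exact ⟨hn', Or.inl (hstep 0 one_pos)⟩
    · by_cases h1 : l 1 = r
      · by_cases hl2 : l 2 = r
        · -- collapse one r
          set l'' : ℕ → X := fun m => if m = 0 then l 0 else l (m + 1) with hl''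
          have key : ∀ m < n - 1, l'' (m + 1) ∈ Y (l'' m) := by
            intro m hm
            rcases Nat.eq_zero_or_pos m with rfl | hmpos
            · simp only [hl'']
              norm_num
              rw [hl2]; rw [← h1]; exact hstep 0 (by omega)
            · simp only [hl'', if_neg (by omega : m + 1 ≠ 0), if_neg (by omega : m ≠ 0)]
              exact hstep (m + 1) (by omega)
          obtain ⟨n', hn'1, l', hl'0, hl'n, hl'step⟩ :=
            ih (n - 1) (by omega) (by omega) l''
              (by simp [hl'']; exact h0)
              (by simp only [hl'', if_neg (by omega : n - 1 ≠ 0)]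
                  have : n - 1 + 1 = n := by omega
                  rw [this]; exact hn') key
          refine ⟨n', hn'1, l', ?_, ?_, hl'step⟩
          · rw [hl'0]; simp [hl'']
          · rw [hl'n]; simp only [hl'', if_neg (by omega : n - 1 ≠ 0)]
            congr 1; omega
        · -- l 1 = r, l 2 ≠ r : jump l 0 → l 2
          have hR : l 2 ∈ (Y (l 0)).erase r ∪
              (if r ∈ Y (l 0) then (Y r).erase r else ∅) := by
            rw [red_mem_iff]
            refine ⟨hl2, Or.inr ⟨?_, ?_⟩⟩
            · rw [← h1]; exact hstep 0 (by omega)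
            · rw [← h1]; exact hstep 1 (by omega)
          rcases Nat.lt_or_ge n 3 with h3 | h3
          · -- n = 2
            interval_cases n
            refine ⟨1, le_refl _, fun m => if m = 0 then l 0 else l 2, rfl, rfl, ?_⟩
            intro m hm
            interval_cases m
            simpa using hR
          · -- n ≥ 3: recurse on shifted path from l 2, length n - 2
            obtain ⟨n', hn'1, l', hl'0, hl'n, hl'step⟩ :=
              ih (n - 2) (by omega) (by omega) (fun m => l (m + 2)) hl2
                (by show l (n - 2 + 2) ≠ r; have : n - 2 + 2 = n := by omega
                    rw [this]; exact hn')
                (fun m hm => hstep (m + 2) (by omega))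
            refine ⟨n' + 1, by omega, fun m => if m = 0 then l 0 else l' (m - 1),
              rfl, ?_, ?_⟩
            · simp only [if_neg (by omega : n' + 1 ≠ 0)]
              simp only [Nat.add_sub_cancel, hl'n]
              congr 1; omega
            · intro m hm
              rcases Nat.eq_zero_or_pos m with rfl | hmpos
              · simpa [hl'0] using hR
              · simp only [if_neg (by omega : m + 1 ≠ 0), if_neg (by omega : m ≠ 0)]
                have : m + 1 - 1 = m - 1 + 1 := by omega
                rw [this]
                exact hl'step (m - 1) (by omega)
      · -- l 1 ≠ r : keep first step, recurse on shift by 1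
        obtain ⟨n', hn'1, l', hl'0, hl'n, hl'step⟩ :=
          ih (n - 1) (by omega) (by omega) (fun m => l (m + 1)) h1
            (by show l (n - 1 + 1) ≠ r; have : n - 1 + 1 = n := by omega
                rw [this]; exact hn')
            (fun m hm => hstep (m + 1) (by omega))
        refine ⟨n' + 1, by omega, fun m => if m = 0 then l 0 else l' (m - 1),
          rfl, ?_, ?_⟩
        · simp only [if_neg (by omega : n' + 1 ≠ 0), Nat.add_sub_cancel, hl'n]
          congr 1; omega
        · intro m hm
          rcases Nat.eq_zero_or_pos m with rfl | hmpos
          · have hR : l 1 ∈ (Y (l 0)).erase r ∪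
                (if r ∈ Y (l 0) then (Y r).erase r else ∅) := by
              rw [red_mem_iff]
              exact ⟨h1, Or.inl (hstep 0 (by omega))⟩
            simpa [hl'0] using hR
          · simp only [if_neg (by omega : m + 1 ≠ 0), if_neg (by omega : m ≠ 0)]
            have : m + 1 - 1 = m - 1 + 1 := by omega
            rw [this]
            exact hl'step (m - 1) (by omega)

/-- Lemma 6: the transition sets of the reduced Markov chain on `X \ {r}`,
with reduced transition probabilities
`_r p i j (ε) = p i j (ε) + p i r (ε) * p r j (ε) / (1 - p r r (ε))`,
are `_r Y_i = Y⁻_{ir} ∪ Y⁺_{ir}` where `Y⁺_{ir} = Y_i \ {r}` and `Y⁻_{ir} = Y_r \ {r}`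
if `r ∈ Y_i` and `∅` otherwise; moreover, the reduced chain again satisfies condition A
(every pair of states in `X \ {r}` is connected by a chain of transitions through these
sets). -/
theorem reduced_chain_transition_sets (ε0 : ℝ) (hε0 : 0 < ε0) (hε1 : ε0 ≤ 1)
    (X : Type*) [Fintype X] [DecidableEq X] (hcard : 1 < Fintype.card X)
    (p : X → X → ℝ → ℝ) (Y : X → Finset X) (r : X)
    (hnn : ∀ i j, ∀ ε ∈ Set.Ioc (0:ℝ) ε0, 0 ≤ p i j ε)
    (hstoch : ∀ i, ∀ ε ∈ Set.Ioc (0:ℝ) ε0, ∑ j, p i j ε = 1)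
    (hYchar : ∀ i j, j ∈ Y i ↔ ∀ ε ∈ Set.Ioc (0:ℝ) ε0, 0 < p i j ε)
    (hzero : ∀ i j, j ∉ Y i → ∀ ε ∈ Set.Ioc (0:ℝ) ε0, p i j ε = 0)
    (hpathA : ∀ i j : X, ∃ n : ℕ, 1 ≤ n ∧ ∃ l : ℕ → X, l 0 = i ∧ l n = j ∧
      ∀ m < n, l (m + 1) ∈ Y (l m))
    (hrr : ∀ ε ∈ Set.Ioc (0:ℝ) ε0, p r r ε < 1) :
    (∀ i, i ≠ r → ∀ j, j ≠ r →
      ((j ∈ (Y i).erase r ∪ (if r ∈ Y i then (Y r).erase r else ∅)) ↔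
        ∀ ε ∈ Set.Ioc (0:ℝ) ε0,
          0 < p i j ε + p i r ε * p r j ε / (1 - p r r ε))) ∧
    (∀ i, i ≠ r → ∀ j, j ≠ r → ∃ n : ℕ, 1 ≤ n ∧ ∃ l : ℕ → X, l 0 = i ∧ l n = j ∧
      ∀ m < n, l (m + 1) ∈
        (Y (l m)).erase r ∪ (if r ∈ Y (l m) then (Y r).erase r else ∅)) := by
  have hε0mem : ε0 ∈ Set.Ioc (0:ℝ) ε0 := ⟨hε0, le_refl _⟩
  constructor
  · intro i hi j hj
    rw [red_mem_iff]
    constructor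
    · rintro ⟨-, hmem | ⟨hri, hjr⟩⟩ <;> intro ε hε
      · have hden : 0 < 1 - p r r ε := by linarith [hrr ε hε]
        have h1 : 0 < p i j ε := (hYchar i j).1 hmem ε hε
        have h2 : 0 ≤ p i r ε * p r j ε / (1 - p r r ε) :=
          div_nonneg (mul_nonneg (hnn i r ε hε) (hnn r j ε hε)) hden.le
        linarith
      · have hden : 0 < 1 - p r r ε := by linarith [hrr ε hε]
        have h1 : 0 ≤ p i j ε := hnn i j ε hε
        have h2 : 0 < p i r ε * p r j ε / (1 - p r r ε) :=
          div_pos (mul_pos ((hYchar i r).1 hri ε hε) ((hYchar r j).1 hjr ε hε)) hden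
        linarith
    · intro h
      refine ⟨hj, ?_⟩
      by_cases hij : j ∈ Y i
      · exact Or.inl hij
      · by_cases hir : r ∈ Y i
        · by_cases hrj : j ∈ Y r
          · exact Or.inr ⟨hir, hrj⟩
          · exfalso
            have := h ε0 hε0mem
            rw [hzero i j hij ε0 hε0mem, hzero r j hrj ε0 hε0mem] at this
            simp at this
        · exfalso
          have := h ε0 hε0mem
          rw [hzero i j hij ε0 hε0mem, hzero i r hir ε0 hε0mem] at this
          simp at this
  · intro i hi j hj
    obtain ⟨n, hn, l, hl0, hln, hstep⟩ := hpathA i j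
    obtain ⟨n', hn', l', h0, hnn', hs⟩ :=
      red_path Y r n hn l (hl0 ▸ hi) (hln ▸ hj) hstep
    exact ⟨n', hn', l', h0.trans hl0, hnn'.trans hln, hs⟩
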